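/- arXiv:1305.4752 — 3 statements merged into one kernel-verified Lean document; each statement's English description precedes it below -/
import Mathlib

section
/- Let m, n ≥ 1 with m + n ≥ 3, let K : ℝ^{m+n} → ℂ be measurable satisfying |K(x₁,…,x_m,y₁,…,y_n)| ≤ C · (∑_{i₁<i₂} |x_{i₁}−x_{i₂}| + ∑_{j₁<j₂} |y_{j₁}−y_{j₂}|)^{2−m−n} off the diagonal. Let I be an interval of length δ with midpoint x₀, let J be an interval of length δ, and suppose m ≥ 2. Then ∫_J ∫_{I_left × I_right × I^{m−2} × J^{n−1}} |K| dx₁…dx_m dy₁…dy_{n−1} dy_n ≤ C' δ², where C' depends only on C, m, n, and I_left, I_right denote the left and right halves of I. -/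
open MeasureTheory Finset
open scoped ENNReal

/-- The sum of pairwise distances among the `x`-coordinates and among the `y`-coordinates. -/
noncomputable def pairSum {m n : ℕ} (z : (Fin m → ℝ) × (Fin n → ℝ)) : ℝ :=
  (∑ p ∈ Finset.univ.filter (fun p : Fin m × Fin m => p.1 < p.2), |z.1 p.1 - z.1 p.2|) +
  ∑ p ∈ Finset.univ.filter (fun p : Fin n × Fin n => p.1 < p.2), |z.2 p.1 - z.2 p.2|

/-- Membership in the diagonal `D = {(x,…,x,y,…,y)}`. -/
def onDiag {m n : ℕ} (z : (Fin m → ℝ) × (Fin n → ℝ)) : Prop :=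
  (∀ i i', z.1 i = z.1 i') ∧ (∀ j j', z.2 j = z.2 j')


lemma keyP {ι : Type*} (t : Finset ι) (G : ℝ≥0∞) (a : ι → ℝ≥0∞)
    (ha : ∀ i ∈ t, a i ≤ G) (e : ℝ) (he : 0 ≤ e) :
    (G ^ (-e)) ^ t.card ≤ ∏ i ∈ t, a i ^ (-e) := by
  rw [← Finset.prod_const]
  refine Finset.prod_le_prod' fun i hi => ?_
  rw [ENNReal.rpow_neg, ENNReal.rpow_neg]
  exact ENNReal.inv_le_inv.2 (ENNReal.rpow_le_rpow (ha i hi) he)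

lemma L1core {s : ℝ} (hs0 : 0 < s) (hs1 : s < 1) {δ : ℝ} (hδ : 0 < δ) :
    ∫⁻ t in Set.Ioo (0:ℝ) δ, ENNReal.ofReal (t ^ (-s)) =
      ENNReal.ofReal (δ ^ (1 - s) / (1 - s)) := by
  have hInt : IntervalIntegrable (fun t : ℝ => t ^ (-s)) volume 0 δ :=
    intervalIntegral.intervalIntegrable_rpow' (by linarith)
  have hIOn : IntegrableOn (fun t : ℝ => t ^ (-s)) (Set.Ioo 0 δ) volume :=
    (hInt.1).mono_set Set.Ioo_subset_Ioc_self
  rw [← ofReal_integral_eq_lintegral_ofReal hIOn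
    (((ae_restrict_iff' measurableSet_Ioo).2 (ae_of_all _
      (fun t ht => Real.rpow_nonneg ht.1.le _))))]
  congr 1
  have h1 : ∫ t in Set.Ioo (0:ℝ) δ, t ^ (-s) = ∫ t in (0:ℝ)..δ, t ^ (-s) := by
    rw [intervalIntegral.integral_of_le hδ.le, MeasureTheory.integral_Ioc_eq_integral_Ioo]
  rw [h1, integral_rpow (Or.inl (by linarith))]
  rw [Real.zero_rpow (by intro h; linarith [h] : -s + 1 ≠ 0)]
  ring_nf

lemma L1right {s : ℝ} (hs0 : 0 < s) (hs1 : s < 1) (c : ℝ) {δ : ℝ} (hδ : 0 < δ) :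
    ∫⁻ t in Set.Ioo c (c + δ), (ENNReal.ofReal |t - c|) ^ (-s) ≤
      ENNReal.ofReal (δ ^ (1 - s) / (1 - s)) := by
  have h1 : ∫⁻ t in Set.Ioo c (c + δ), (ENNReal.ofReal |t - c|) ^ (-s) =
      ∫⁻ t in Set.Ioo c (c + δ), ENNReal.ofReal ((t - c) ^ (-s)) := by
    refine setLIntegral_congr_fun measurableSet_Ioo (fun t ht => ?_)
    rw [abs_of_pos (by linarith [ht.1])]
    rw [← ENNReal.ofReal_rpow_of_pos (by linarith [ht.1])]
  rw [h1]
  have hInt : IntervalIntegrable (fun t : ℝ => t ^ (-s)) volume 0 δ :=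
    intervalIntegral.intervalIntegrable_rpow' (by linarith)
  have hInt2 : IntervalIntegrable (fun t : ℝ => (t - c) ^ (-s)) volume c (c + δ) := by
    have := hInt.comp_sub_right c
    rwa [zero_add, add_comm δ c] at this
  have hIOn : IntegrableOn (fun t : ℝ => (t - c) ^ (-s)) (Set.Ioo c (c + δ)) volume :=
    hInt2.1.mono_set Set.Ioo_subset_Ioc_self
  rw [← ofReal_integral_eq_lintegral_ofReal hIOn
    (((ae_restrict_iff' measurableSet_Ioo).2 (ae_of_all _
      (fun t ht => Real.rpow_nonneg (by linarith [ht.1]) _))))]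
  apply ENNReal.ofReal_le_ofReal
  have h2 : ∫ t in Set.Ioo c (c + δ), (t - c) ^ (-s) = ∫ t in c..(c + δ), (t - c) ^ (-s) := by
    rw [intervalIntegral.integral_of_le (by linarith), MeasureTheory.integral_Ioc_eq_integral_Ioo]
  rw [h2, intervalIntegral.integral_comp_sub_right (fun t : ℝ => t ^ (-s)) c, sub_self,
    add_sub_cancel_left, integral_rpow (Or.inl (by linarith))]
  rw [Real.zero_rpow (by intro h; linarith [h] : -s + 1 ≠ 0)]
  apply le_of_eq; ring_nf

lemma L1left {s : ℝ} (hs0 : 0 < s) (hs1 : s < 1) (c : ℝ) {δ : ℝ} (hδ : 0 < δ) :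
    ∫⁻ t in Set.Ioo (c - δ) c, (ENNReal.ofReal |t - c|) ^ (-s) ≤
      ENNReal.ofReal (δ ^ (1 - s) / (1 - s)) := by
  have h1 : ∫⁻ t in Set.Ioo (c - δ) c, (ENNReal.ofReal |t - c|) ^ (-s) =
      ∫⁻ t in Set.Ioo (c - δ) c, ENNReal.ofReal ((c - t) ^ (-s)) := by
    refine setLIntegral_congr_fun measurableSet_Ioo (fun t ht => ?_)
    rw [abs_sub_comm, abs_of_pos (by linarith [ht.2])]
    rw [← ENNReal.ofReal_rpow_of_pos (by linarith [ht.2])]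
  rw [h1]
  have hInt : IntervalIntegrable (fun t : ℝ => t ^ (-s)) volume 0 δ :=
    intervalIntegral.intervalIntegrable_rpow' (by linarith)
  have hInt2 : IntervalIntegrable (fun t : ℝ => (c - t) ^ (-s)) volume (c - δ) c := by
    have := (hInt.comp_sub_left c).symm
    rwa [sub_zero] at this
  have hIOn : IntegrableOn (fun t : ℝ => (c - t) ^ (-s)) (Set.Ioo (c - δ) c) volume :=
    hInt2.1.mono_set Set.Ioo_subset_Ioc_self
  rw [← ofReal_integral_eq_lintegral_ofReal hIOn
    (((ae_restrict_iff' measurableSet_Ioo).2 (ae_of_all _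
      (fun t ht => Real.rpow_nonneg (by linarith [ht.2]) _))))]
  apply ENNReal.ofReal_le_ofReal
  have h2 : ∫ t in Set.Ioo (c - δ) c, (c - t) ^ (-s) = ∫ t in (c - δ)..c, (c - t) ^ (-s) := by
    rw [intervalIntegral.integral_of_le (by linarith), MeasureTheory.integral_Ioc_eq_integral_Ioo]
  rw [h2, intervalIntegral.integral_comp_sub_left (fun t : ℝ => t ^ (-s)) c, sub_self,
    sub_sub_cancel, integral_rpow (Or.inl (by linarith))]
  rw [Real.zero_rpow (by intro h; linarith [h] : -s + 1 ≠ 0)]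
  apply le_of_eq; ring_nf

lemma L1 {s : ℝ} (hs0 : 0 < s) (hs1 : s < 1) (c : ℝ) {δ : ℝ} (hδ : 0 < δ) :
    ∫⁻ t in Set.Ico (c - δ) (c + δ), (ENNReal.ofReal |t - c|) ^ (-s) ≤
      ENNReal.ofReal (2 / (1 - s) * δ ^ (1 - s)) := by
  have hsub : Set.Ico (c - δ) (c + δ) ⊆
      (Set.Ioo (c - δ) c ∪ Set.Ico c (c + δ)) ∪ {c - δ} := by
    intro t ht
    rcases eq_or_lt_of_le ht.1 with h | h
    · exact Or.inr (by simp [← h])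
    · rcases lt_or_ge t c with h2 | h2
      · exact Or.inl (Or.inl ⟨h, h2⟩)
      · exact Or.inl (Or.inr ⟨h2, ht.2⟩)
  calc ∫⁻ t in Set.Ico (c - δ) (c + δ), (ENNReal.ofReal |t - c|) ^ (-s)
      ≤ ∫⁻ t in (Set.Ioo (c - δ) c ∪ Set.Ico c (c + δ)) ∪ {c - δ},
          (ENNReal.ofReal |t - c|) ^ (-s) := lintegral_mono_set hsub
    _ ≤ (∫⁻ t in Set.Ioo (c - δ) c ∪ Set.Ico c (c + δ), (ENNReal.ofReal |t - c|) ^ (-s))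
          + ∫⁻ t in ({c - δ} : Set ℝ), (ENNReal.ofReal |t - c|) ^ (-s) :=
        lintegral_union_le _ _ _
    _ ≤ ((∫⁻ t in Set.Ioo (c - δ) c, (ENNReal.ofReal |t - c|) ^ (-s))
          + ∫⁻ t in Set.Ico c (c + δ), (ENNReal.ofReal |t - c|) ^ (-s)) + 0 := by
        gcongr
        · exact lintegral_union_le _ _ _
        · exact le_of_eq (setLIntegral_measure_zero _ _ (by simp))
    _ ≤ (ENNReal.ofReal (δ ^ (1 - s) / (1 - s)) + ENNReal.ofReal (δ ^ (1 - s) / (1 - s))) + 0 := by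
        gcongr
        · exact L1left hs0 hs1 c hδ
        · rw [Measure.restrict_congr_set Ioo_ae_eq_Ico.symm]
          exact L1right hs0 hs1 c hδ
    _ = ENNReal.ofReal (δ ^ (1 - s) / (1 - s) + δ ^ (1 - s) / (1 - s)) := by
        rw [add_zero, ENNReal.ofReal_add] <;>
          exact div_nonneg (Real.rpow_nonneg hδ.le _) (by linarith)
    _ ≤ ENNReal.ofReal (2 / (1 - s) * δ ^ (1 - s)) := by
        apply ENNReal.ofReal_le_ofReal
        apply le_of_eq; ring

lemma lintegral_fin_prod : ∀ {m : ℕ} (f : Fin m → ℝ → ℝ≥0∞), (∀ i, Measurable (f i)) →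
    ∫⁻ x : Fin m → ℝ, ∏ i, f i (x i) = ∏ i, ∫⁻ t, f i t := by
  intro m
  induction m with
  | zero =>
    intro f hf
    simp [Finset.univ_eq_empty, lintegral_const, volume_pi, Measure.pi_empty_univ]
  | succ m ih =>
    intro f hf
    have hmeas : Measurable fun x : Fin (m + 1) → ℝ => ∏ i, f i (x i) :=
      Finset.measurable_prod _ fun i _ => (hf i).comp (measurable_pi_apply i)
    have h := (measurePreserving_piFinSuccAbove (fun _ : Fin (m + 1) => (volume : Measure ℝ)) 0)
    have h2 := h.symm (MeasurableEquiv.piFinSuccAbove (fun _ : Fin (m + 1) => ℝ) 0)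
    rw [volume_pi, ← h2.lintegral_comp hmeas]
    simp_rw [MeasurableEquiv.piFinSuccAbove_symm_apply, Fin.insertNthEquiv,
      Equiv.coe_fn_mk, Fin.insertNth_zero, Fin.prod_univ_succ, Fin.cons_zero, Fin.cons_succ]
    simp only [Fin.zero_succAbove, cast_eq]
    have hg : Measurable fun w : Fin m → ℝ => ∏ i : Fin m, f i.succ (w i) :=
      Finset.measurable_prod _ fun i _ => (hf i.succ).comp (measurable_pi_apply i)
    rw [MeasureTheory.lintegral_prod_mul (hf 0).aemeasurable hg.aemeasurable]
    rw [← volume_pi, ih (fun i => f i.succ) (fun i => hf i.succ)]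

lemma y_part {k : ℕ} (fy : ℝ → ℝ → ℝ≥0∞)
    (hfy : Measurable fun p : ℝ × ℝ => fy p.1 p.2)
    (b δ : ℝ) (B : ℝ≥0∞)
    (hB : ∀ t ∈ Set.Ico b (b + δ), ∫⁻ u, fy t u ≤ B) :
    ∫⁻ y : Fin (k + 1) → ℝ,
      (Set.Ico b (b + δ)).indicator (fun _ => (1:ℝ≥0∞)) (y (Fin.last k)) *
        ∏ j : Fin k, fy (y (Fin.last k)) (y j.castSucc) ≤ ENNReal.ofReal δ * B ^ k := by
  have hind : Measurable ((Set.Ico b (b + δ)).indicator (fun _ => (1:ℝ≥0∞))) :=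
    measurable_const.indicator measurableSet_Ico
  have hΦ : Measurable fun y : Fin (k + 1) → ℝ =>
      (Set.Ico b (b + δ)).indicator (fun _ => (1:ℝ≥0∞)) (y (Fin.last k)) *
        ∏ j : Fin k, fy (y (Fin.last k)) (y j.castSucc) := by
    refine (hind.comp (measurable_pi_apply _)).mul ?_
    refine Finset.measurable_prod _ fun j _ => ?_
    have hp : Measurable fun y : Fin (k + 1) → ℝ => (y (Fin.last k), y j.castSucc) :=
      (measurable_pi_apply _).prodMk (measurable_pi_apply _)
    exact hfy.comp hp
  have h := (measurePreserving_piFinSuccAbove (fun _ : Fin (k + 1) => (volume : Measure ℝ))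
    (Fin.last k))
  have h2 := h.symm (MeasurableEquiv.piFinSuccAbove (fun _ : Fin (k + 1) => ℝ) (Fin.last k))
  rw [volume_pi, ← h2.lintegral_comp hΦ]
  simp_rw [MeasurableEquiv.piFinSuccAbove_symm_apply, Fin.insertNthEquiv, Equiv.coe_fn_mk,
    Fin.insertNth_apply_same, ← Fin.succAbove_last_apply, Fin.insertNth_apply_succAbove]
  have hF : Measurable fun p : ℝ × (Fin k → ℝ) =>
      (Set.Ico b (b + δ)).indicator (fun _ => (1:ℝ≥0∞)) p.1 * ∏ j : Fin k, fy p.1 (p.2 j) := by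
    refine (hind.comp measurable_fst).mul ?_
    refine Finset.measurable_prod _ fun j _ => ?_
    have hp : Measurable fun p : ℝ × (Fin k → ℝ) => (p.1, p.2 j) :=
      measurable_fst.prodMk ((measurable_pi_apply j).comp measurable_snd)
    exact hfy.comp hp
  rw [MeasureTheory.lintegral_prod _ hF.aemeasurable]
  have hstep : ∀ t : ℝ,
      (∫⁻ w : Fin k → ℝ, (Set.Ico b (b + δ)).indicator (fun _ => (1:ℝ≥0∞)) t *
        ∏ j : Fin k, fy t (w j) ∂(Measure.pi fun _ => volume)) ≤
      (Set.Ico b (b + δ)).indicator (fun _ => (1:ℝ≥0∞)) t * B ^ k := by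
    intro t
    rw [lintegral_const_mul' _ _ (by
      rw [Set.indicator_apply]; split_ifs <;> simp)]
    have hft : Measurable (fy t) := by
      have hp : Measurable fun u : ℝ => (t, u) := measurable_const.prodMk measurable_id
      exact hfy.comp hp
    rw [← volume_pi, lintegral_fin_prod (fun _ u => fy t u) (fun _ => hft)]
    rw [Finset.prod_const, Finset.card_univ, Fintype.card_fin]
    rw [Set.indicator_apply]
    split_ifs with ht
    · simpa using pow_le_pow_left' (hB t ht) k
    · simp
  calc (∫⁻ t, ∫⁻ w : Fin k → ℝ, (Set.Ico b (b + δ)).indicator (fun _ => (1:ℝ≥0∞)) t *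
        ∏ j : Fin k, fy t (w j) ∂(Measure.pi fun _ => volume))
      ≤ ∫⁻ t, (Set.Ico b (b + δ)).indicator (fun _ => (1:ℝ≥0∞)) t * B ^ k :=
        lintegral_mono hstep
    _ = ∫⁻ t, (Set.Ico b (b + δ)).indicator (fun _ => B ^ k) t := by
        congr 1; funext t; rw [Set.indicator_apply, Set.indicator_apply]
        split_ifs <;> simp
    _ = ENNReal.ofReal δ * B ^ k := by
        rw [lintegral_indicator measurableSet_Ico, setLIntegral_const, Real.volume_Ico,
          add_sub_cancel_left, mul_comm]

set_option maxHeartbeats 1000000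

/-- Integrating a Calderón–Zygmund kernel of homogeneity `2-m-n` over
`I_left × I_right × I^{m-2} × J^n`, where `I` has midpoint `x₀` and length `δ`,
gives at most a constant (depending only on `C`, `m`, `n`) times `δ²`. -/
theorem stmt1 (m n : ℕ) (hm : 2 ≤ m) (hn : 1 ≤ n) (hmn : 3 ≤ m + n) (C : ℝ) (hC : 0 ≤ C) :
    ∃ C' : ℝ, 0 ≤ C' ∧
      ∀ (K : (Fin m → ℝ) × (Fin n → ℝ) → ℂ), Measurable K →
      (∀ z, ¬ onDiag z → ‖K z‖ ≤ C * pairSum z ^ ((2 : ℝ) - m - n)) →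
      ∀ (δ x₀ b : ℝ), 0 < δ →
      (∫⁻ z in {z : (Fin m → ℝ) × (Fin n → ℝ) |
          z.1 ⟨0, by omega⟩ ∈ Set.Ico (x₀ - δ / 2) x₀ ∧
          z.1 ⟨1, by omega⟩ ∈ Set.Ico x₀ (x₀ + δ / 2) ∧
          (∀ i : Fin m, 2 ≤ (i : ℕ) → z.1 i ∈ Set.Ico (x₀ - δ / 2) (x₀ + δ / 2)) ∧
          (∀ j : Fin n, z.2 j ∈ Set.Ico b (b + δ))},
        (‖K z‖₊ : ENNReal)) ≤ ENNReal.ofReal (C' * δ ^ 2) := by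
  obtain ⟨k, rfl⟩ : ∃ k, n = k + 1 := ⟨n - 1, by omega⟩
  set d : ℕ := m + k with hd_def
  have hd2 : 2 ≤ d := by omega
  set dR : ℝ := (d : ℝ) with hdR_def
  have hdR2 : (2:ℝ) ≤ dR := by rw [hdR_def]; exact_mod_cast hd2
  have hdR : 0 < dR := by linarith
  set e : ℝ := (dR - 1) / dR with he_def
  have he0 : 0 < e := div_pos (by linarith) hdR
  have he1 : e < 1 := (div_lt_one hdR).2 (by linarith)
  have h1e : 1 - e = 1 / dR := by rw [he_def]; field_simp; ring
  set AR : ℝ := 2 * ((m : ℝ) + k + 1) with hAR_def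
  have hAR : 0 < AR := by positivity
  set e1 : ℝ := ((m + k - 1 : ℕ) : ℝ) with he1_def
  have he1R : e1 = dR - 1 := by
    rw [he1_def, hdR_def, hd_def, Nat.cast_sub (by omega)]
    push_cast
    ring
  have he1nn : 0 ≤ e1 := by rw [he1R]; linarith
  have hCnn : 0 ≤ C * AR ^ e1 * (2 / (1 - e)) ^ d :=
    mul_nonneg (mul_nonneg hC (Real.rpow_nonneg hAR.le _))
      (pow_nonneg (div_nonneg (by norm_num) (by linarith)) _)
  refine ⟨C * AR ^ e1 * (2 / (1 - e)) ^ d, hCnn, ?_⟩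
  intro K hK hKb δ x₀ b hδ
  set i0 : Fin m := ⟨0, by omega⟩ with hi0_def
  set i1 : Fin m := ⟨1, by omega⟩ with hi1_def
  set fx : ℝ → ℝ≥0∞ :=
    (Set.Ico (x₀ - δ) (x₀ + δ)).indicator (fun u => (ENNReal.ofReal |u - x₀|) ^ (-e))
    with hfx_def
  set fy : ℝ → ℝ → ℝ≥0∞ := fun t =>
    (Set.Ico b (b + δ)).indicator (fun u => (ENNReal.ofReal |u - t|) ^ (-e))
    with hfy_def
  set ind : ℝ → ℝ≥0∞ := (Set.Ico b (b + δ)).indicator (fun _ => (1:ℝ≥0∞)) with hind_def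
  set C₂ : ℝ≥0∞ := ENNReal.ofReal (C * AR ^ e1) with hC2_def
  set B : ℝ≥0∞ := ENNReal.ofReal (2 / (1 - e) * δ ^ (1 - e)) with hB_def
  -- measurability
  have hrpow : ∀ c : ℝ, Measurable fun u : ℝ => (ENNReal.ofReal |u - c|) ^ (-e) := by
    intro c
    exact (ENNReal.continuous_rpow_const.measurable).comp
      ((measurable_id.sub measurable_const).abs.ennreal_ofReal)
  have hfx : Measurable fx := (hrpow x₀).indicator measurableSet_Ico
  have hfyp : Measurable fun p : ℝ × ℝ => fy p.1 p.2 := by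
    have heq : (fun p : ℝ × ℝ => fy p.1 p.2) =
        (Prod.snd ⁻¹' Set.Ico b (b + δ)).indicator
          (fun p : ℝ × ℝ => (ENNReal.ofReal |p.2 - p.1|) ^ (-e)) := by
      funext p
      by_cases hp : p.2 ∈ Set.Ico b (b + δ) <;>
        simp [hfy_def, Set.indicator_apply, hp]
    rw [heq]
    exact Measurable.indicator
      ((ENNReal.continuous_rpow_const.measurable).comp
        ((measurable_snd.sub measurable_fst).abs.ennreal_ofReal))
      (measurable_snd measurableSet_Ico)
  have hΦx : Measurable fun x : Fin m → ℝ => ∏ i, fx (x i) :=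
    Finset.measurable_prod _ fun i _ => hfx.comp (measurable_pi_apply i)
  have hΦy : Measurable fun y : Fin (k+1) → ℝ =>
      ind (y (Fin.last k)) * ∏ j : Fin k, fy (y (Fin.last k)) (y j.castSucc) := by
    refine ((measurable_const.indicator measurableSet_Ico).comp (measurable_pi_apply _)).mul ?_
    refine Finset.measurable_prod _ fun j _ => ?_
    have hp : Measurable fun y : Fin (k+1) → ℝ => (y (Fin.last k), y j.castSucc) :=
      (measurable_pi_apply _).prodMk (measurable_pi_apply _)
    exact hfyp.comp hp
  -- pointwise bound on S
  have key : ∀ z : (Fin m → ℝ) × (Fin (k+1) → ℝ),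
      z ∈ {z : (Fin m → ℝ) × (Fin (k+1) → ℝ) |
          z.1 ⟨0, by omega⟩ ∈ Set.Ico (x₀ - δ / 2) x₀ ∧
          z.1 ⟨1, by omega⟩ ∈ Set.Ico x₀ (x₀ + δ / 2) ∧
          (∀ i : Fin m, 2 ≤ (i : ℕ) → z.1 i ∈ Set.Ico (x₀ - δ / 2) (x₀ + δ / 2)) ∧
          (∀ j : Fin (k+1), z.2 j ∈ Set.Ico b (b + δ))} →
      (‖K z‖₊ : ℝ≥0∞) ≤
        C₂ * ((∏ i, fx (z.1 i)) *
          (ind (z.2 (Fin.last k)) * ∏ j : Fin k, fy (z.2 (Fin.last k)) (z.2 j.castSucc))) := by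
    rintro ⟨x, y⟩ ⟨h0, h1, h2, h3⟩
    have hx00 : x i0 < x₀ := h0.2
    have hx01 : x₀ - δ / 2 ≤ x i0 := h0.1
    have hx1 : x₀ ≤ x i1 := h1.1
    set P := pairSum (⟨x, y⟩ : (Fin m → ℝ) × (Fin (k+1) → ℝ)) with hP_def
    have pair_x : ∀ p : Fin m × Fin m, p.1 < p.2 → |x p.1 - x p.2| ≤ P := by
      intro p hp
      have ha : |x p.1 - x p.2| ≤
          ∑ q ∈ Finset.univ.filter (fun q : Fin m × Fin m => q.1 < q.2), |x q.1 - x q.2| :=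
        Finset.single_le_sum (f := fun q : Fin m × Fin m => |x q.1 - x q.2|)
          (fun q _ => abs_nonneg _) (Finset.mem_filter.2 ⟨Finset.mem_univ p, hp⟩)
      have hb : 0 ≤ ∑ q ∈ Finset.univ.filter (fun q : Fin (k+1) × Fin (k+1) => q.1 < q.2),
          |y q.1 - y q.2| := Finset.sum_nonneg fun q _ => abs_nonneg _
      rw [hP_def]
      unfold pairSum
      dsimp only
      linarith
    have pair_y : ∀ p : Fin (k+1) × Fin (k+1), p.1 < p.2 → |y p.1 - y p.2| ≤ P := by
      intro p hp
      have ha : |y p.1 - y p.2| ≤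
          ∑ q ∈ Finset.univ.filter (fun q : Fin (k+1) × Fin (k+1) => q.1 < q.2), |y q.1 - y q.2| :=
        Finset.single_le_sum (f := fun q : Fin (k+1) × Fin (k+1) => |y q.1 - y q.2|)
          (fun q _ => abs_nonneg _) (Finset.mem_filter.2 ⟨Finset.mem_univ p, hp⟩)
      have hb : 0 ≤ ∑ q ∈ Finset.univ.filter (fun q : Fin m × Fin m => q.1 < q.2),
          |x q.1 - x q.2| := Finset.sum_nonneg fun q _ => abs_nonneg _
      rw [hP_def]
      unfold pairSum
      dsimp only
      linarith
    have hi01 : i0 < i1 := by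
      rw [hi0_def, hi1_def]
      exact Fin.mk_lt_mk.2 one_pos
    have hP0 : 0 < P := by
      refine lt_of_lt_of_le ?_ (pair_x (i0, i1) hi01)
      refine abs_pos.2 fun hh => ?_
      have : x i0 = x i1 := by linarith [sub_eq_zero.1 hh]
      linarith
    have h01abs : |x i0 - x i1| = x i1 - x i0 := by
      rw [abs_sub_comm]; exact abs_of_nonneg (by linarith)
    have hxi0 : |x i0 - x₀| ≤ |x i0 - x i1| := by
      rw [abs_sub_comm, abs_of_nonneg (by linarith : (0:ℝ) ≤ x₀ - x i0), h01abs]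
      linarith
    have hxle : ∀ i, |x i - x₀| ≤ 2 * P := by
      intro i
      by_cases hii : i = i0
      · rw [hii]
        linarith [le_trans hxi0 (pair_x (i0, i1) hi01), hP0.le]
      · have hv : (i : ℕ) ≠ 0 := fun hh => hii (Fin.ext hh)
        have hlt : i0 < i := by
          rw [Fin.lt_def]
          exact Nat.pos_of_ne_zero hv
        calc |x i - x₀| ≤ |x i - x i0| + |x i0 - x₀| := abs_sub_le _ _ _
          _ ≤ P + P := add_le_add
              (by rw [abs_sub_comm]; exact pair_x (i0, i) hlt)
              (le_trans hxi0 (pair_x (i0, i1) hi01))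
          _ = 2 * P := by ring
    have hyle : ∀ j : Fin k, |y j.castSucc - y (Fin.last k)| ≤ P :=
      fun j => pair_y (j.castSucc, Fin.last k) (Fin.castSucc_lt_last j)
    set g : ℝ := (∑ i, |x i - x₀|) + ∑ j : Fin k, |y j.castSucc - y (Fin.last k)| with hg_def
    have hxg : ∀ i, |x i - x₀| ≤ g := by
      intro i
      have := Finset.single_le_sum (f := fun i => |x i - x₀|)
        (fun q _ => abs_nonneg _) (Finset.mem_univ i)
      have h2s : 0 ≤ ∑ j : Fin k, |y j.castSucc - y (Fin.last k)| :=
        Finset.sum_nonneg fun q _ => abs_nonneg _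
      rw [hg_def]; linarith
    have hyg : ∀ j : Fin k, |y j.castSucc - y (Fin.last k)| ≤ g := by
      intro j
      have := Finset.single_le_sum (f := fun j : Fin k => |y j.castSucc - y (Fin.last k)|)
        (fun q _ => abs_nonneg _) (Finset.mem_univ j)
      have h1s : 0 ≤ ∑ i, |x i - x₀| := Finset.sum_nonneg fun q _ => abs_nonneg _
      rw [hg_def]; linarith
    have hg0 : 0 < g := by
      have h1' : 0 < |x i0 - x₀| := abs_pos.2 (sub_ne_zero.2 hx00.ne)
      linarith [hxg i0]
    have hgP : g ≤ AR * P := by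
      have hs1 : ∑ i, |x i - x₀| ≤ (m : ℝ) * (2 * P) := by
        calc ∑ i, |x i - x₀| ≤ ∑ _i : Fin m, 2 * P := Finset.sum_le_sum fun i _ => hxle i
          _ = (m : ℝ) * (2 * P) := by
              rw [Finset.sum_const, Finset.card_univ, Fintype.card_fin, nsmul_eq_mul]
      have hs2 : ∑ j : Fin k, |y j.castSucc - y (Fin.last k)| ≤ (k : ℝ) * P := by
        calc ∑ j : Fin k, |y j.castSucc - y (Fin.last k)| ≤ ∑ _j : Fin k, P :=
              Finset.sum_le_sum fun j _ => hyle j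
          _ = (k : ℝ) * P := by
              rw [Finset.sum_const, Finset.card_univ, Fintype.card_fin, nsmul_eq_mul]
      rw [hg_def, hAR_def]
      nlinarith [hP0.le, Nat.cast_nonneg (α := ℝ) m, Nat.cast_nonneg (α := ℝ) k]
    have hgAP : g / AR ≤ P := (div_le_iff₀ hAR).2 (by linarith)
    have hnd : ¬ onDiag (⟨x, y⟩ : (Fin m → ℝ) × (Fin (k+1) → ℝ)) := by
      rintro ⟨hxd, -⟩
      have := hxd i0 i1
      linarith
    have hKz : ‖K (x, y)‖ ≤ C * P ^ (-e1) := by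
      have hb := hKb (x, y) hnd
      have hexp : ((2:ℝ) - (m:ℝ) - ((k+1 : ℕ) : ℝ)) = -e1 := by
        rw [he1_def, Nat.cast_sub (by omega)]
        push_cast
        ring
      rwa [hexp] at hb
    have hrpow1 : P ^ (-e1) ≤ (g / AR) ^ (-e1) :=
      Real.rpow_le_rpow_of_nonpos (div_pos hg0 hAR) hgAP (neg_nonpos.2 he1nn)
    have hsplit : (g / AR) ^ (-e1) = g ^ (-e1) * AR ^ e1 := by
      rw [Real.div_rpow hg0.le hAR.le, Real.rpow_neg hAR.le, div_eq_mul_inv, inv_inv]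
    have hreal : ‖K (x, y)‖ ≤ (C * AR ^ e1) * g ^ (-e1) := by
      calc ‖K (x, y)‖ ≤ C * P ^ (-e1) := hKz
        _ ≤ C * ((g / AR) ^ (-e1)) := mul_le_mul_of_nonneg_left hrpow1 hC
        _ = (C * AR ^ e1) * g ^ (-e1) := by rw [hsplit]; ring
    have hxmem : ∀ i, x i ∈ Set.Ico (x₀ - δ) (x₀ + δ) := by
      intro i
      by_cases hi : i = i0
      · rw [hi]; exact ⟨by linarith, by linarith⟩
      · by_cases hi' : i = i1
        · rw [hi']; exact ⟨by linarith [h1.1], by linarith [h1.2]⟩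
        · have hge : 2 ≤ (i : ℕ) := by
            have h0' : (i : ℕ) ≠ 0 := fun hh => hi (Fin.ext hh)
            have h1' : (i : ℕ) ≠ 1 := fun hh => hi' (Fin.ext hh)
            omega
          obtain ⟨ha, hb⟩ := h2 i hge
          exact ⟨by linarith, by linarith⟩
    have hfx_eq : ∀ i, fx (x i) = (ENNReal.ofReal |x i - x₀|) ^ (-e) := fun i =>
      Set.indicator_of_mem (hxmem i) _
    have hfy_eq : ∀ j : Fin k, fy (y (Fin.last k)) (y j.castSucc) =
        (ENNReal.ofReal |y j.castSucc - y (Fin.last k)|) ^ (-e) := fun j =>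
      Set.indicator_of_mem (h3 _) _
    have hind_eq : ind (y (Fin.last k)) = 1 := Set.indicator_of_mem (h3 _) _
    set G := ENNReal.ofReal g with hG_def
    have hG0 : G ≠ 0 := (ENNReal.ofReal_pos.2 hg0).ne'
    have hGt : G ≠ ⊤ := ENNReal.ofReal_ne_top
    have hdRmk : (m : ℝ) + (k : ℝ) = dR := by
      rw [hdR_def, hd_def]; push_cast; ring
    have he_mul : e * dR = dR - 1 := by
      rw [he_def]; field_simp
    have hGsplit : G ^ (-e1) = (G ^ (-e)) ^ m * (G ^ (-e)) ^ k := by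
      rw [← ENNReal.rpow_natCast (G ^ (-e)) m, ← ENNReal.rpow_natCast (G ^ (-e)) k,
        ← ENNReal.rpow_mul, ← ENNReal.rpow_mul, ← ENNReal.rpow_add _ _ hG0 hGt]
      congr 1
      have hsum : (-e) * (m : ℝ) + (-e) * (k : ℝ) = -(e * dR) := by
        rw [← hdRmk]; ring
      rw [hsum, he_mul, he1R]
    have hstep1 : (G ^ (-e)) ^ m ≤ ∏ i, (ENNReal.ofReal |x i - x₀|) ^ (-e) := by
      have := keyP (Finset.univ : Finset (Fin m)) G (fun i => ENNReal.ofReal |x i - x₀|)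
        (fun i _ => ENNReal.ofReal_le_ofReal (hxg i)) e he0.le
      rwa [Finset.card_univ, Fintype.card_fin] at this
    have hstep2 : (G ^ (-e)) ^ k ≤
        ∏ j : Fin k, (ENNReal.ofReal |y j.castSucc - y (Fin.last k)|) ^ (-e) := by
      have := keyP (Finset.univ : Finset (Fin k)) G
        (fun j => ENNReal.ofReal |y j.castSucc - y (Fin.last k)|)
        (fun j _ => ENNReal.ofReal_le_ofReal (hyg j)) e he0.le
      rwa [Finset.card_univ, Fintype.card_fin] at this
    calc ((‖K (x, y)‖₊ : ℝ≥0∞))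
        = ENNReal.ofReal ‖K (x, y)‖ := (ofReal_norm_eq_enorm _).symm
      _ ≤ ENNReal.ofReal ((C * AR ^ e1) * g ^ (-e1)) := ENNReal.ofReal_le_ofReal hreal
      _ = C₂ * ENNReal.ofReal (g ^ (-e1)) := by
          rw [hC2_def, ← ENNReal.ofReal_mul (mul_nonneg hC (Real.rpow_nonneg hAR.le _))]
      _ = C₂ * G ^ (-e1) := by rw [hG_def, ENNReal.ofReal_rpow_of_pos hg0]
      _ = C₂ * ((G ^ (-e)) ^ m * (G ^ (-e)) ^ k) := by rw [hGsplit]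
      _ ≤ C₂ * ((∏ i, (ENNReal.ofReal |x i - x₀|) ^ (-e)) *
            ∏ j : Fin k, (ENNReal.ofReal |y j.castSucc - y (Fin.last k)|) ^ (-e)) :=
          mul_le_mul_right (mul_le_mul' hstep1 hstep2) _
      _ = C₂ * ((∏ i, fx (x i)) *
            (ind (y (Fin.last k)) * ∏ j : Fin k, fy (y (Fin.last k)) (y j.castSucc))) := by
          rw [hind_eq, one_mul]
          congr 1
          congr 1
          · exact (Finset.prod_congr rfl fun i _ => hfx_eq i).symm
          · exact (Finset.prod_congr rfl fun j _ => hfy_eq j).symm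
  -- main chain
  have hGmeas : Measurable fun z : (Fin m → ℝ) × (Fin (k+1) → ℝ) =>
      C₂ * ((∏ i, fx (z.1 i)) *
        (ind (z.2 (Fin.last k)) * ∏ j : Fin k, fy (z.2 (Fin.last k)) (z.2 j.castSucc))) :=
    ((hΦx.comp measurable_fst).mul (hΦy.comp measurable_snd)).const_mul C₂
  have h1B : ∫⁻ t, fx t ≤ B := by
    rw [hfx_def, lintegral_indicator measurableSet_Ico]
    exact L1 he0 he1 x₀ hδ
  have hxInt : ∫⁻ xx : Fin m → ℝ, ∏ i, fx (xx i) ≤ B ^ m := by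
    rw [lintegral_fin_prod (fun _ => fx) (fun _ => hfx), Finset.prod_const,
      Finset.card_univ, Fintype.card_fin]
    exact pow_le_pow_left' h1B m
  have hyB : ∀ t ∈ Set.Ico b (b + δ), ∫⁻ u, fy t u ≤ B := by
    intro t ht
    rw [hfy_def]
    dsimp only
    rw [lintegral_indicator measurableSet_Ico]
    refine le_trans (lintegral_mono_set ?_) (L1 he0 he1 t hδ)
    intro u hu
    exact ⟨by linarith [ht.2, hu.1], by linarith [ht.1, hu.2]⟩
  have hyInt : ∫⁻ yy : Fin (k+1) → ℝ,
      ind (yy (Fin.last k)) * ∏ j : Fin k, fy (yy (Fin.last k)) (yy j.castSucc) ≤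
      ENNReal.ofReal δ * B ^ k := y_part fy hfyp b δ B hyB
  have hBd : B ^ d = ENNReal.ofReal ((2 / (1 - e)) ^ d * δ) := by
    have hnn : 0 ≤ 2 / (1 - e) * δ ^ (1 - e) :=
      mul_nonneg (div_nonneg (by norm_num) (by linarith)) (Real.rpow_nonneg hδ.le _)
    rw [hB_def, ← ENNReal.ofReal_pow hnn]
    congr 1
    rw [mul_pow]
    congr 1
    rw [← Real.rpow_natCast (δ ^ (1 - e)) d, ← Real.rpow_mul hδ.le, h1e, ← hdR_def,
      one_div, inv_mul_cancel₀ (ne_of_gt hdR), Real.rpow_one]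
  calc (∫⁻ z in {z : (Fin m → ℝ) × (Fin (k+1) → ℝ) |
          z.1 ⟨0, by omega⟩ ∈ Set.Ico (x₀ - δ / 2) x₀ ∧
          z.1 ⟨1, by omega⟩ ∈ Set.Ico x₀ (x₀ + δ / 2) ∧
          (∀ i : Fin m, 2 ≤ (i : ℕ) → z.1 i ∈ Set.Ico (x₀ - δ / 2) (x₀ + δ / 2)) ∧
          (∀ j : Fin (k+1), z.2 j ∈ Set.Ico b (b + δ))},
        (‖K z‖₊ : ℝ≥0∞))
      ≤ ∫⁻ z in {z : (Fin m → ℝ) × (Fin (k+1) → ℝ) |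
          z.1 ⟨0, by omega⟩ ∈ Set.Ico (x₀ - δ / 2) x₀ ∧
          z.1 ⟨1, by omega⟩ ∈ Set.Ico x₀ (x₀ + δ / 2) ∧
          (∀ i : Fin m, 2 ≤ (i : ℕ) → z.1 i ∈ Set.Ico (x₀ - δ / 2) (x₀ + δ / 2)) ∧
          (∀ j : Fin (k+1), z.2 j ∈ Set.Ico b (b + δ))},
          C₂ * ((∏ i, fx (z.1 i)) *
            (ind (z.2 (Fin.last k)) * ∏ j : Fin k, fy (z.2 (Fin.last k)) (z.2 j.castSucc))) :=
        setLIntegral_mono hGmeas key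
    _ ≤ ∫⁻ z : (Fin m → ℝ) × (Fin (k+1) → ℝ),
          C₂ * ((∏ i, fx (z.1 i)) *
            (ind (z.2 (Fin.last k)) * ∏ j : Fin k, fy (z.2 (Fin.last k)) (z.2 j.castSucc))) :=
        setLIntegral_le_lintegral _ _
    _ = C₂ * ∫⁻ z : (Fin m → ℝ) × (Fin (k+1) → ℝ),
          (∏ i, fx (z.1 i)) *
            (ind (z.2 (Fin.last k)) * ∏ j : Fin k, fy (z.2 (Fin.last k)) (z.2 j.castSucc)) :=
        lintegral_const_mul' _ _ (by rw [hC2_def]; exact ENNReal.ofReal_ne_top)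
    _ = C₂ * ((∫⁻ xx : Fin m → ℝ, ∏ i, fx (xx i)) *
          ∫⁻ yy : Fin (k+1) → ℝ,
            ind (yy (Fin.last k)) * ∏ j : Fin k, fy (yy (Fin.last k)) (yy j.castSucc)) := by
        rw [Measure.volume_eq_prod, MeasureTheory.lintegral_prod_mul hΦx.aemeasurable hΦy.aemeasurable]
    _ ≤ C₂ * (B ^ m * (ENNReal.ofReal δ * B ^ k)) := by
        gcongr
    _ = C₂ * (ENNReal.ofReal ((2 / (1 - e)) ^ d * δ) * ENNReal.ofReal δ) := by
        rw [← hBd]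
        rw [hd_def, pow_add]
        ring
    _ ≤ ENNReal.ofReal (C * AR ^ e1 * (2 / (1 - e)) ^ d * δ ^ 2) := by
        rw [hC2_def,
          ← ENNReal.ofReal_mul
            (mul_nonneg (pow_nonneg (div_nonneg (by norm_num) (by linarith)) _) hδ.le),
          ← ENNReal.ofReal_mul (mul_nonneg hC (Real.rpow_nonneg hAR.le _))]
        apply ENNReal.ofReal_le_ofReal
        apply le_of_eq
        ring
end

section
/- Let K : ℝ^{m+n} → ℂ be integrable and constant on every (m+n)-dimensional dyadic cube I₁ × ⋯ × I_m × J₁ × ⋯ × J_n disjoint from the diagonal D. Suppose a^{(1)}, …, a^{(m)}, b^{(1)}, …, b^{(n)} ∈ {𝟏, 𝐡} and at least one of them equals 𝐡. If the dyadic intervals I₁, …, I_m, J₁, …, J_n all have the same length but are not all of the form I₁ = ⋯ = I_m and J₁ = ⋯ = J_n, then ⟨K, a^{(1)}_{I₁} ⊗ ⋯ ⊗ a^{(m)}_{I_m} ⊗ b^{(1)}_{J₁} ⊗ ⋯ ⊗ b^{(n)}_{J_n}⟩_{L²(ℝ^{m+n})} = 0. -/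
open MeasureTheory

/-- The dyadic interval `[2^{-k} ℓ, 2^{-k} (ℓ+1))`. -/
def dyI (k l : ℤ) : Set ℝ := Set.Ico ((2:ℝ) ^ (-k) * l) ((2:ℝ) ^ (-k) * (l + 1))

/-- The characteristic function `𝟏_I` of a dyadic interval. -/
noncomputable def oneI (k l : ℤ) : ℝ → ℝ := (dyI k l).indicator 1

/-- The L^∞-normalized Haar function `𝐡_I = 𝟏_{I_left} - 𝟏_{I_right}`. -/
noncomputable def haarI (k l : ℤ) : ℝ → ℝ :=
  fun x => (dyI (k+1) (2*l)).indicator 1 x - (dyI (k+1) (2*l+1)).indicator 1 x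

/-- Wavelet factor: Haar function if the flag is `true`, characteristic function otherwise. -/
noncomputable def wfactor (b : Bool) (k l : ℤ) : ℝ → ℝ := if b then haarI k l else oneI k l


lemma dyI_subset_left (k l : ℤ) : dyI (k+1) (2*l) ⊆ dyI k l := by
  have h2 : ((2:ℝ) ^ (-(k+1)) : ℝ) * 2 = (2:ℝ) ^ (-k) := by
    rw [← zpow_add_one₀ (by norm_num : (2:ℝ) ≠ 0)]; ring_nf
  have hp := zpow_pos (by norm_num : (0:ℝ) < 2) (-(k+1))
  intro x hx
  obtain ⟨h1, h2'⟩ := hx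
  push_cast at h1 h2'
  refine ⟨?_, ?_⟩ <;> rw [← h2] <;> nlinarith

lemma dyI_subset_right (k l : ℤ) : dyI (k+1) (2*l+1) ⊆ dyI k l := by
  have h2 : ((2:ℝ) ^ (-(k+1)) : ℝ) * 2 = (2:ℝ) ^ (-k) := by
    rw [← zpow_add_one₀ (by norm_num : (2:ℝ) ≠ 0)]; ring_nf
  intro x hx
  obtain ⟨h1, h2'⟩ := hx
  have hp := zpow_pos (by norm_num : (0:ℝ) < 2) (-(k+1))
  push_cast at h1 h2'
  refine ⟨?_, ?_⟩ <;> rw [← h2] <;> nlinarith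

lemma wfactor_eq_zero (b : Bool) (k l : ℤ) {x : ℝ} (hx : x ∉ dyI k l) :
    wfactor b k l x = 0 := by
  cases b <;> simp only [wfactor, haarI, oneI, if_true, if_false]
  · exact Set.indicator_of_notMem hx _
  · rw [Set.indicator_of_notMem (fun h => hx (dyI_subset_left k l h)),
      Set.indicator_of_notMem (fun h => hx (dyI_subset_right k l h)), sub_zero]

lemma dyI_inj {k l l' : ℤ} {x : ℝ} (h : x ∈ dyI k l) (h' : x ∈ dyI k l') : l = l' := by
  have hp := zpow_pos (by norm_num : (0:ℝ) < 2) (-k)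
  obtain ⟨a1, a2⟩ := h; obtain ⟨b1, b2⟩ := h'
  have h1 : (l:ℝ) < l' + 1 := by nlinarith
  have h2 : (l':ℝ) < l + 1 := by nlinarith
  have : l < l' + 1 := by exact_mod_cast h1
  have : l' < l + 1 := by exact_mod_cast h2
  omega

lemma integrable_ind (a b : ℝ) :
    Integrable ((Set.Ico a b).indicator (1 : ℝ → ℝ)) := by
  refine (integrableOn_const (hs := ?_)).integrable_indicator measurableSet_Ico
  rw [Real.volume_Ico]; exact ENNReal.ofReal_ne_top

lemma integral_haar (k l : ℤ) : ∫ x : ℝ, haarI k l x = 0 := by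
  unfold haarI dyI
  rw [integral_sub (integrable_ind _ _) (integrable_ind _ _)]
  rw [integral_indicator_one measurableSet_Ico, integral_indicator_one measurableSet_Ico]
  rw [Real.volume_real_Ico, Real.volume_real_Ico]
  have hp := zpow_pos (by norm_num : (0:ℝ) < 2) (-(k+1))
  have e1 : (2:ℝ) ^ (-(k+1)) * ((2*l : ℤ) + 1) - (2:ℝ) ^ (-(k+1)) * ((2*l : ℤ)) = (2:ℝ) ^ (-(k+1)) := by push_cast; ring
  have e2 : (2:ℝ) ^ (-(k+1)) * (((2*l+1) : ℤ) + 1) - (2:ℝ) ^ (-(k+1)) * (((2*l+1) : ℤ)) = (2:ℝ) ^ (-(k+1)) := by push_cast; ring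
  rw [e1, e2, sub_self]

/-- If `K` is constant on dyadic cubes disjoint from the diagonal, at least one of the chosen
one-dimensional factors is a Haar function, and the dyadic intervals (all of the same length)
are not all equal in each group, then the corresponding wavelet coefficient of `K` vanishes. -/
theorem stmt3 (m n : ℕ) (K : (Fin m → ℝ) × (Fin n → ℝ) → ℂ) (hK : Integrable K)
    (hconst : ∀ (k : ℤ) (I : Fin m → ℤ) (J : Fin n → ℤ),
      Disjoint {z : (Fin m → ℝ) × (Fin n → ℝ) |
          (∀ i, z.1 i ∈ dyI k (I i)) ∧ (∀ j, z.2 j ∈ dyI k (J j))}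
        {z : (Fin m → ℝ) × (Fin n → ℝ) |
          (∃ x, ∀ i, z.1 i = x) ∧ (∃ y, ∀ j, z.2 j = y)} →
      ∀ z w : (Fin m → ℝ) × (Fin n → ℝ),
        ((∀ i, z.1 i ∈ dyI k (I i)) ∧ (∀ j, z.2 j ∈ dyI k (J j))) →
        ((∀ i, w.1 i ∈ dyI k (I i)) ∧ (∀ j, w.2 j ∈ dyI k (J j))) →
        K z = K w)
    (s : Fin m → Bool) (t : Fin n → Bool)
    (hst : (∃ i, s i = true) ∨ (∃ j, t j = true))
    (k : ℤ) (I : Fin m → ℤ) (J : Fin n → ℤ)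
    (hne : ¬ ((∀ i i', I i = I i') ∧ (∀ j j', J j = J j'))) :
    ∫ z : (Fin m → ℝ) × (Fin n → ℝ),
      K z * (∏ i, (wfactor (s i) k (I i) (z.1 i) : ℂ)) *
        ∏ j, (wfactor (t j) k (J j) (z.2 j) : ℂ) = 0 := by
  have hp := zpow_pos (by norm_num : (0:ℝ) < 2) (-k)
  set z₀ : (Fin m → ℝ) × (Fin n → ℝ) :=
    (fun i => (2:ℝ) ^ (-k) * I i, fun j => (2:ℝ) ^ (-k) * J j) with hz₀def
  have hmem : ∀ (l : ℤ), (2:ℝ) ^ (-k) * l ∈ dyI k l := fun l =>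
    ⟨le_refl _, by push_cast; nlinarith⟩
  have hz₀ : (∀ i, z₀.1 i ∈ dyI k (I i)) ∧ (∀ j, z₀.2 j ∈ dyI k (J j)) :=
    ⟨fun i => hmem _, fun j => hmem _⟩
  have hdisj : Disjoint {z : (Fin m → ℝ) × (Fin n → ℝ) |
          (∀ i, z.1 i ∈ dyI k (I i)) ∧ (∀ j, z.2 j ∈ dyI k (J j))}
        {z : (Fin m → ℝ) × (Fin n → ℝ) |
          (∃ x, ∀ i, z.1 i = x) ∧ (∃ y, ∀ j, z.2 j = y)} := by
    rw [Set.disjoint_left]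
    rintro z ⟨h1, h2⟩ ⟨⟨x, hx⟩, ⟨y, hy⟩⟩
    exact hne ⟨fun i i' => dyI_inj (hx i ▸ h1 i) (hx i' ▸ h1 i'),
      fun j j' => dyI_inj (hy j ▸ h2 j) (hy j' ▸ h2 j')⟩
  set c : ℂ := K z₀ with hc
  have hpt : ∀ z : (Fin m → ℝ) × (Fin n → ℝ),
      K z * (∏ i, (wfactor (s i) k (I i) (z.1 i) : ℂ)) *
        ∏ j, (wfactor (t j) k (J j) (z.2 j) : ℂ) =
      c * ((∏ i, (wfactor (s i) k (I i) (z.1 i) : ℂ)) *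
        ∏ j, (wfactor (t j) k (J j) (z.2 j) : ℂ)) := by
    intro z
    by_cases hz : (∀ i, z.1 i ∈ dyI k (I i)) ∧ (∀ j, z.2 j ∈ dyI k (J j))
    · rw [hconst k I J hdisj z z₀ hz hz₀, mul_assoc]
    · rcases not_and_or.1 hz with h | h
      · push_neg at h
        obtain ⟨i, hi⟩ := h
        have : (∏ i, (wfactor (s i) k (I i) (z.1 i) : ℂ)) = 0 :=
          Finset.prod_eq_zero (Finset.mem_univ i)
            (by rw [wfactor_eq_zero _ _ _ hi]; exact Complex.ofReal_zero)
        rw [this]; ring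
      · push_neg at h
        obtain ⟨j, hj⟩ := h
        have : (∏ j, (wfactor (t j) k (J j) (z.2 j) : ℂ)) = 0 :=
          Finset.prod_eq_zero (Finset.mem_univ j)
            (by rw [wfactor_eq_zero _ _ _ hj]; exact Complex.ofReal_zero)
        rw [this]; ring
  rw [integral_congr_ae (Filter.Eventually.of_forall hpt), integral_const_mul _ _]
  rw [show (volume : Measure ((Fin m → ℝ) × (Fin n → ℝ))) = (volume.prod volume) from
    Measure.volume_eq_prod _ _]
  rw [integral_prod_mul (f := fun x : Fin m → ℝ => ∏ i, (wfactor (s i) k (I i) (x i) : ℂ))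
    (g := fun y : Fin n → ℝ => ∏ j, (wfactor (t j) k (J j) (y j) : ℂ))]
  rw [integral_fintype_prod_volume_eq_prod (ι := Fin m) (fun i (x : ℝ) => (wfactor (s i) k (I i) x : ℂ)),
    integral_fintype_prod_volume_eq_prod (ι := Fin n) (fun j (y : ℝ) => (wfactor (t j) k (J j) y : ℂ))]
  have hzero : ∀ (l : ℤ), ∫ x : ℝ, (wfactor true k l x : ℂ) = 0 := by
    intro l
    have h1 : ∫ x : ℝ, wfactor true k l x = 0 := by
      simp only [wfactor, if_true]; exact integral_haar k l
    calc ∫ x : ℝ, (wfactor true k l x : ℂ)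
        = ((∫ x : ℝ, wfactor true k l x : ℝ) : ℂ) := integral_ofReal
      _ = 0 := by rw [h1]; exact Complex.ofReal_zero
  rcases hst with ⟨i, hi⟩ | ⟨j, hj⟩
  · have : (∏ i, ∫ x : ℝ, (wfactor (s i) k (I i) x : ℂ)) = 0 :=
      Finset.prod_eq_zero (Finset.mem_univ i) (by rw [hi]; exact hzero _)
    rw [this]; ring
  · have : (∏ j, ∫ y : ℝ, (wfactor (t j) k (J j) y : ℂ)) = 0 :=
      Finset.prod_eq_zero (Finset.mem_univ j) (by rw [hj]; exact hzero _)
    rw [this]; ring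
end

section
/- Let G be a finite bipartite graph without isolated vertices whose connected components G_ℓ have bipartition classes X_ℓ and Y_ℓ. Define d_{i,j} = max{|X_ℓ|,|Y_ℓ|} if G_ℓ is complete bipartite or max{|X_ℓ|,|Y_ℓ|} ≤ 2, and d_{i,j} = max{|X_ℓ|,|Y_ℓ|}+1 otherwise, for every edge (i,j) of G_ℓ. If G has at least two connected components, then ∑_{(i,j)∈E} 1/d_{i,j} > 1. -/
open Finset Sum

/-- For a finite bipartite graph without isolated vertices whose thresholds `d` are defined
componentwise (`max{|X_ℓ|,|Y_ℓ|}` for complete or small components, `max{|X_ℓ|,|Y_ℓ|}+1`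
otherwise), having at least two connected components forces `∑_{(i,j)∈E} 1/d_{i,j} > 1`. -/
theorem stmt7 {X Y : Type} [Fintype X] [Fintype Y]
    (G : SimpleGraph (X ⊕ Y)) [DecidableRel G.Adj]
    (hbipX : ∀ i i' : X, ¬ G.Adj (inl i) (inl i'))
    (hbipY : ∀ j j' : Y, ¬ G.Adj (inr j) (inr j'))
    (hiso : ∀ v, ∃ w, G.Adj v w)
    (Xc Yc : G.ConnectedComponent → ℕ)
    (hXc : ∀ c, Xc c = Nat.card {i : X // G.connectedComponentMk (inl i) = c})
    (hYc : ∀ c, Yc c = Nat.card {j : Y // G.connectedComponentMk (inr j) = c})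
    (complete : G.ConnectedComponent → Prop)
    (hcomplete : ∀ c, complete c ↔ ∀ (i : X) (j : Y),
        G.connectedComponentMk (inl i) = c → G.connectedComponentMk (inr j) = c →
        G.Adj (inl i) (inr j))
    (d : X × Y → ℕ)
    (hd1 : ∀ p : X × Y, G.Adj (inl p.1) (inr p.2) →
      (complete (G.connectedComponentMk (inl p.1)) ∨
        max (Xc (G.connectedComponentMk (inl p.1))) (Yc (G.connectedComponentMk (inl p.1))) ≤ 2) →
      d p = max (Xc (G.connectedComponentMk (inl p.1))) (Yc (G.connectedComponentMk (inl p.1))))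
    (hd2 : ∀ p : X × Y, G.Adj (inl p.1) (inr p.2) →
      ¬ (complete (G.connectedComponentMk (inl p.1)) ∨
        max (Xc (G.connectedComponentMk (inl p.1))) (Yc (G.connectedComponentMk (inl p.1))) ≤ 2) →
      d p = max (Xc (G.connectedComponentMk (inl p.1))) (Yc (G.connectedComponentMk (inl p.1))) + 1)
    (hcomp : ∃ c c' : G.ConnectedComponent, c ≠ c') :
    1 < ∑ p ∈ Finset.univ.filter (fun p : X × Y => G.Adj (inl p.1) (inr p.2)),
      (1 : ℝ) / d p := by
  classical
  set S := Finset.univ.filter (fun p : X × Y => G.Adj (inl p.1) (inr p.2)) with hS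
  have hXn : ∀ i : X, ∃ j : Y, G.Adj (inl i) (inr j) := by
    intro i
    obtain ⟨w, hw⟩ := hiso (inl i)
    cases w with
    | inl i' => exact absurd hw (hbipX i i')
    | inr j => exact ⟨j, hw⟩
  have hYn : ∀ j : Y, ∃ i : X, G.Adj (inl i) (inr j) := by
    intro j
    obtain ⟨w, hw⟩ := hiso (inr j)
    cases w with
    | inl i => exact ⟨i, hw.symm⟩
    | inr j' => exact absurd hw (hbipY j j')
  choose nb hnb using hXn
  choose nb' hnb' using hYn
  set dC : G.ConnectedComponent → ℕ := fun c =>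
    if complete c ∨ max (Xc c) (Yc c) ≤ 2 then max (Xc c) (Yc c)
    else max (Xc c) (Yc c) + 1 with hdC
  have hdC1 : ∀ c, (complete c ∨ max (Xc c) (Yc c) ≤ 2) → dC c = max (Xc c) (Yc c) := by
    intro c h
    rw [hdC]
    exact if_pos h
  have hdC2 : ∀ c, ¬ (complete c ∨ max (Xc c) (Yc c) ≤ 2) →
      dC c = max (Xc c) (Yc c) + 1 := by
    intro c h
    rw [hdC]
    exact if_neg h
  have hdp : ∀ p ∈ S, (1 : ℝ) / d p = 1 / dC (G.connectedComponentMk (inl p.1)) := by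
    intro p hp
    have hadj : G.Adj (inl p.1) (inr p.2) := (Finset.mem_filter.mp hp).2
    by_cases h : complete (G.connectedComponentMk (inl p.1)) ∨
        max (Xc (G.connectedComponentMk (inl p.1))) (Yc (G.connectedComponentMk (inl p.1))) ≤ 2
    · rw [hd1 p hadj h, hdC1 _ h]
    · rw [hd2 p hadj h, hdC2 _ h]
  rw [Finset.sum_congr rfl hdp]
  rw [← Finset.sum_fiberwise_of_maps_to
    (g := fun p : X × Y => G.connectedComponentMk (inl p.1)) (t := Finset.univ)
    (fun x _ => Finset.mem_univ _)]
  have key : ∀ c : G.ConnectedComponent,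
      (3 : ℝ) / 4 ≤ ∑ p ∈ S.filter (fun p => G.connectedComponentMk (inl p.1) = c),
        (1 : ℝ) / dC (G.connectedComponentMk (inl p.1)) := by
    intro c
    set T := S.filter (fun p => G.connectedComponentMk (inl p.1) = c) with hT
    have hsum : ∑ p ∈ T, (1 : ℝ) / dC (G.connectedComponentMk (inl p.1))
        = (T.card : ℝ) / dC c := by
      rw [Finset.sum_congr rfl (fun p hp => by
        rw [(Finset.mem_filter.mp hp).2]), Finset.sum_const, nsmul_eq_mul, mul_one_div]
    rw [hsum]
    set m := max (Xc c) (Yc c) with hm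
    have hXcard : Xc c = (Finset.univ.filter
        (fun i : X => G.connectedComponentMk (inl i) = c)).card := by
      rw [hXc, Nat.card_eq_fintype_card, Fintype.card_subtype]
    have hYcard : Yc c = (Finset.univ.filter
        (fun j : Y => G.connectedComponentMk (inr j) = c)).card := by
      rw [hYc, Nat.card_eq_fintype_card, Fintype.card_subtype]
    have hXleT : Xc c ≤ T.card := by
      rw [hXcard]
      apply Finset.card_le_card_of_injOn (fun i => (i, nb i))
      · intro i hi
        have hic := (Finset.mem_filter.mp hi).2
        rw [hT, Finset.mem_coe, Finset.mem_filter, hS, Finset.mem_filter]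
        exact ⟨⟨Finset.mem_univ _, hnb i⟩, hic⟩
      · intro a _ b _ h
        exact ((Prod.mk.injEq _ _ _ _).mp h).1
    have hYleT : Yc c ≤ T.card := by
      rw [hYcard]
      apply Finset.card_le_card_of_injOn (fun j => (nb' j, j))
      · intro j hj
        have hjc := (Finset.mem_filter.mp hj).2
        rw [hT, Finset.mem_coe, Finset.mem_filter, hS, Finset.mem_filter]
        refine ⟨⟨Finset.mem_univ _, hnb' j⟩, ?_⟩
        rw [SimpleGraph.ConnectedComponent.sound (hnb' j).reachable]
        exact hjc
      · intro a _ b _ h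
        exact ((Prod.mk.injEq _ _ _ _).mp h).2
    have hmT : m ≤ T.card := max_le hXleT hYleT
    have hm1 : 1 ≤ m := by
      obtain ⟨v, hv⟩ := c.exists_rep
      cases v with
      | inl i =>
        have h0 : 0 < Xc c := by
          rw [hXcard]
          exact Finset.card_pos.mpr ⟨i, Finset.mem_filter.mpr ⟨Finset.mem_univ _, hv⟩⟩
        exact le_max_of_le_left h0
      | inr j =>
        have h0 : 0 < Yc c := by
          rw [hYcard]
          exact Finset.card_pos.mpr ⟨j, Finset.mem_filter.mpr ⟨Finset.mem_univ _, hv⟩⟩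
        exact le_max_of_le_right h0
    have hTm : (m : ℝ) ≤ (T.card : ℝ) := by exact_mod_cast hmT
    by_cases h : complete c ∨ m ≤ 2
    · rw [hdC1 c (by rw [← hm]; exact h), ← hm]
      have hmpos : (0 : ℝ) < (m : ℝ) := by exact_mod_cast hm1
      have h1 : (1 : ℝ) ≤ (T.card : ℝ) / m := by
        rw [le_div_iff₀ hmpos]
        linarith
      linarith
    · rw [hdC2 c (by rw [← hm]; exact h), ← hm]
      have hm3 : 3 ≤ m := by
        push_neg at h
        omega
      have hm3' : (3 : ℝ) ≤ (m : ℝ) := by exact_mod_cast hm3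
      push_cast
      rw [div_le_div_iff₀ (by norm_num : (0:ℝ) < 4) (by linarith : (0:ℝ) < (m:ℝ) + 1)]
      nlinarith
  have hcard : 2 ≤ Fintype.card G.ConnectedComponent := by
    obtain ⟨c, c', hcc⟩ := hcomp
    exact Fintype.one_lt_card_iff_nontrivial.mpr ⟨⟨c, c', hcc⟩⟩
  calc (1 : ℝ) < (Fintype.card G.ConnectedComponent : ℝ) * (3 / 4) := by
        have h2 : (2:ℝ) ≤ (Fintype.card G.ConnectedComponent : ℝ) := by exact_mod_cast hcard
        nlinarith
    _ = ∑ _c : G.ConnectedComponent, (3:ℝ)/4 := by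
        rw [Finset.sum_const, Finset.card_univ, nsmul_eq_mul]
    _ ≤ _ := Finset.sum_le_sum (fun c _ => key c)
end
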